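/- Let E be a finite-dimensional real vector space, T ⊆ E a linear subspace with annihilator N = { α ∈ E* : α vanishes on T }, and π : E* → E a skew-symmetric linear map (i.e. α(π(β)) = −β(π(α)) for all α, β ∈ E*). Then { v ∈ E : α(v) = 0 for every α ∈ E* with π(α) ∈ T } = π(N). -/
import Mathlib

/-- For a skew-symmetric `π : E* → E` on a finite-dimensional real vector space and a
subspace `T ⊆ E` with annihilator `N`, the set of vectors annihilated by every covector
`α` with `π(α) ∈ T` equals `π(N)`. -/
theorem annihilated_by_preimage_eq_image_annihilator
    (E : Type*) [AddCommGroup E] [Module ℝ E] [FiniteDimensional ℝ E]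
    (T : Submodule ℝ E)
    (π : Module.Dual ℝ E →ₗ[ℝ] E)
    (hskew : ∀ α β : Module.Dual ℝ E, α (π β) = - β (π α)) :
    {v : E | ∀ α : Module.Dual ℝ E, π α ∈ T → α v = 0} =
      π '' {α : Module.Dual ℝ E | ∀ t ∈ T, α t = 0} := by
  have key : (Submodule.map π T.dualAnnihilator).dualAnnihilator = T.comap π := by
    ext α
    simp only [Submodule.mem_dualAnnihilator, Submodule.mem_comap]
    constructor
    · intro h
      rw [← Subspace.dualAnnihilator_dualCoannihilator_eq (W := T),
        Submodule.mem_dualCoannihilator]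
      intro β hβ
      have := h (π β) (Submodule.mem_map_of_mem hβ)
      rw [hskew] at this
      linarith
    · intro hT w hw
      obtain ⟨β, hβ, rfl⟩ := Submodule.mem_map.mp hw
      rw [hskew]
      rw [Submodule.mem_dualAnnihilator] at hβ
      simp [hβ _ hT]
  have final : Submodule.map π T.dualAnnihilator = (T.comap π).dualCoannihilator := by
    rw [← key, Subspace.dualAnnihilator_dualCoannihilator_eq]
  ext v
  simp only [Set.mem_setOf_eq, Set.mem_image]
  constructor
  · intro h
    have hv : v ∈ (T.comap π).dualCoannihilator := by
      rw [Submodule.mem_dualCoannihilator]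
      exact fun φ hφ => h φ hφ
    rw [← final] at hv
    obtain ⟨β, hβ, rfl⟩ := Submodule.mem_map.mp hv
    exact ⟨β, fun t ht => (Submodule.mem_dualAnnihilator β).mp hβ t ht, rfl⟩
  · rintro ⟨β, hβ, rfl⟩ α hα
    rw [hskew]
    simp [hβ _ hα]
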